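/- Let p, q ∈ ℂ and let I ⊆ F be the two-sided ideal generated by the three elements x₂x₁ − x₁x₂, x₃x₁ − x₁x₃ + q x₁², and x₃x₂ − x₂x₃ + (2q − p) x₁x₂. Then the images in F/I of the monomials x₁^{a₁} x₂^{a₂} x₃^{a₃}, over all a₁, a₂, a₃ ∈ ℕ, form a ℂ-basis of F/I. (This quotient is the Nichols algebra associated to the braiding of type R_{1,2} with t = 1 and b = p − 2q; it has Gelfand–Kirillov dimension 3.) -/

import Mathlib

/-- The free associative unital `ℂ`-algebra on three generators. -/
abbrev F : Type := FreeAlgebra ℂ (Fin 3)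

/-- The generators `x₁ = X 0`, `x₂ = X 1`, `x₃ = X 2`. -/
noncomputable def X (i : Fin 3) : F := FreeAlgebra.ι ℂ i

/-- Generators: `x₂x₁ − x₁x₂`, `x₃x₁ − x₁x₃ + q x₁²`, `x₃x₂ − x₂x₃ + (2q − p) x₁x₂`. -/
noncomputable def S (p q : ℂ) : Set F :=
  {X 1 * X 0 - X 0 * X 1,
   X 2 * X 0 - X 0 * X 2 + q • (X 0 * X 0),
   X 2 * X 1 - X 1 * X 2 + (2 * q - p) • (X 0 * X 1)}

/-- The relation whose two-sided-ideal closure is the ideal generated by `S`;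
`RingQuot rel` is the quotient `F/I`. -/
def rel (p q : ℂ) : F → F → Prop := fun x y => x ∈ S p q ∧ y = 0

/-! ### Auxiliary: the representation on `(ℕ × ℕ × ℕ) →₀ ℂ` -/

noncomputable section AuxRep

abbrev MM : Type := (ℕ × ℕ × ℕ) →₀ ℂ

/-- operator from values on basis -/
noncomputable def opOf (t : ℕ × ℕ × ℕ → MM) : Module.End ℂ MM :=
  Finsupp.lsum ℂ (fun e => LinearMap.toSpanSingleton ℂ MM (t e))

lemma opOf_single (t : ℕ × ℕ × ℕ → MM) (e : ℕ × ℕ × ℕ) (r : ℂ) :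
    opOf t (Finsupp.single e r) = r • t e := by
  simp [opOf, LinearMap.toSpanSingleton]

noncomputable def opA : Module.End ℂ MM :=
  opOf (fun e => Finsupp.single (e.1 + 1, e.2.1, e.2.2) 1)

noncomputable def opB : Module.End ℂ MM :=
  opOf (fun e => Finsupp.single (e.1, e.2.1 + 1, e.2.2) 1)

noncomputable def opC (p q : ℂ) : Module.End ℂ MM :=
  opOf (fun e => Finsupp.single (e.1, e.2.1, e.2.2 + 1) 1
    - ((e.2.1 : ℂ) * (2 * q - p) + (e.1 : ℂ) * q) • Finsupp.single (e.1 + 1, e.2.1, e.2.2) 1)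

lemma end_ext {f g : Module.End ℂ MM}
    (h : ∀ e : ℕ × ℕ × ℕ, f (Finsupp.single e 1) = g (Finsupp.single e 1)) : f = g := by
  apply Finsupp.lhom_ext'
  intro e
  apply LinearMap.ext_ring
  simpa using h e

lemma relBA : opB * opA = opA * opB := by
  apply end_ext
  rintro ⟨a, b, c⟩
  simp [Module.End.mul_apply, opA, opB, opOf_single]

lemma relCA (p q : ℂ) : opC p q * opA - opA * opC p q + q • (opA * opA) = 0 := by
  apply end_ext
  rintro ⟨a, b, c⟩
  simp only [LinearMap.sub_apply, LinearMap.add_apply, LinearMap.smul_apply,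
    Module.End.mul_apply, opA, opC, opOf_single, one_smul, map_sub, map_smul,
    LinearMap.zero_apply, smul_sub]
  push_cast
  rw [Finsupp.smul_single, Finsupp.smul_single, Finsupp.smul_single]
  abel_nf
  simp only [Finsupp.smul_single, ← Finsupp.single_add, ← Finsupp.single_neg, smul_eq_mul]
  rw [Finsupp.single_eq_zero]
  push_cast [zsmul_eq_mul]
  ring

lemma relCB (p q : ℂ) : opC p q * opB - opB * opC p q + (2 * q - p) • (opA * opB) = 0 := by
  apply end_ext
  rintro ⟨a, b, c⟩
  simp only [LinearMap.sub_apply, LinearMap.add_apply, LinearMap.smul_apply,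
    Module.End.mul_apply, opA, opB, opC, opOf_single, one_smul, map_sub, map_smul,
    LinearMap.zero_apply, smul_sub]
  push_cast
  rw [Finsupp.smul_single, Finsupp.smul_single, Finsupp.smul_single]
  abel_nf
  simp only [Finsupp.smul_single, ← Finsupp.single_add, ← Finsupp.single_neg, smul_eq_mul]
  rw [Finsupp.single_eq_zero]
  push_cast [zsmul_eq_mul]
  ring

lemma opA_pow (k a b c : ℕ) :
    (opA ^ k) (Finsupp.single (a, b, c) 1) = Finsupp.single (a + k, b, c) 1 := by
  induction k with
  | zero => simp
  | succ n ih =>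
    rw [pow_succ', Module.End.mul_apply, ih, opA, opOf_single, one_smul]
    rfl

lemma opB_pow (k a b c : ℕ) :
    (opB ^ k) (Finsupp.single (a, b, c) 1) = Finsupp.single (a, b + k, c) 1 := by
  induction k with
  | zero => simp
  | succ n ih =>
    rw [pow_succ', Module.End.mul_apply, ih, opB, opOf_single, one_smul]
    rfl

lemma opC_pow (p q : ℂ) (k c : ℕ) :
    ((opC p q) ^ k) (Finsupp.single (0, 0, c) 1) = Finsupp.single (0, 0, c + k) 1 := by
  induction k with
  | zero => simp
  | succ n ih =>
    rw [pow_succ', Module.End.mul_apply, ih, opC, opOf_single, one_smul]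
    push_cast
    simp only [Nat.cast_zero, zero_mul, add_zero, zero_smul, sub_zero, mul_zero, zero_add]
    rfl

end AuxRep

/-! ### Auxiliary: generic commutation lemmas in a `ℂ`-algebra -/

section AuxAlg

variable {A : Type*} [Ring A] [Algebra ℂ A]

lemma genq20 (x z : A) (q : ℂ) (h : z * x = x * z - q • (x * x)) (a : ℕ) :
    z * x ^ a = x ^ a * z - ((a : ℂ) * q) • x ^ (a + 1) := by
  induction a with
  | zero => simp
  | succ n ih =>
    push_cast
    calc z * x ^ (n + 1) = (z * x ^ n) * x := by rw [pow_succ, ← mul_assoc]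
    _ = (x ^ n * z - ((n : ℂ) * q) • x ^ (n + 1)) * x := by rw [ih]
    _ = x ^ n * (z * x) - ((n : ℂ) * q) • (x ^ (n + 1) * x) := by
        rw [sub_mul, smul_mul_assoc, mul_assoc]
    _ = x ^ n * (x * z - q • (x * x)) - ((n : ℂ) * q) • x ^ (n + 2) := by rw [h, ← pow_succ]
    _ = x ^ (n + 1) * z - q • x ^ (n + 2) - ((n : ℂ) * q) • x ^ (n + 2) := by
        rw [mul_sub, mul_smul_comm, ← mul_assoc, ← pow_succ, ← mul_assoc, ← pow_succ, ← pow_succ]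
    _ = x ^ (n + 1) * z - (((n : ℂ) + 1) * q) • x ^ (n + 1 + 1) := by
        rw [show ((n : ℂ) + 1) * q = (n : ℂ) * q + q by ring, add_smul]
        abel

lemma genq21 (x y z : A) (t : ℂ) (h : z * y = y * z - t • (x * y)) (hxy : y * x = x * y)
    (b : ℕ) : z * y ^ b = y ^ b * z - ((b : ℂ) * t) • (x * y ^ b) := by
  induction b with
  | zero => simp
  | succ n ih =>
    push_cast
    have hyx : y ^ n * x = x * y ^ n := (Commute.pow_left (hxy : Commute y x) n).eq
    calc z * y ^ (n + 1) = (z * y ^ n) * y := by rw [pow_succ, ← mul_assoc]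
    _ = (y ^ n * z - ((n : ℂ) * t) • (x * y ^ n)) * y := by rw [ih]
    _ = y ^ n * (z * y) - ((n : ℂ) * t) • (x * (y ^ n * y)) := by
        rw [sub_mul, smul_mul_assoc, mul_assoc, mul_assoc]
    _ = y ^ n * (y * z - t • (x * y)) - ((n : ℂ) * t) • (x * y ^ (n + 1)) := by
        rw [h, ← pow_succ]
    _ = y ^ (n + 1) * z - t • (x * y ^ (n + 1)) - ((n : ℂ) * t) • (x * y ^ (n + 1)) := by
        rw [mul_sub, mul_smul_comm, ← mul_assoc, ← pow_succ, ← mul_assoc, hyx,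
          mul_assoc, ← pow_succ]
    _ = y ^ (n + 1) * z - (((n : ℂ) + 1) * t) • (x * y ^ (n + 1)) := by
        rw [show ((n : ℂ) + 1) * t = (n : ℂ) * t + t by ring, add_smul]
        abel

lemma genmul2 (x y z : A) (q t : ℂ)
    (h2 : z * x = x * z - q • (x * x))
    (h3 : z * y = y * z - t • (x * y))
    (h1 : y * x = x * y) (a b c : ℕ) :
    z * (x ^ a * y ^ b * z ^ c) =
      x ^ a * y ^ b * z ^ (c + 1)
        - ((b : ℂ) * t) • (x ^ (a + 1) * y ^ b * z ^ c)
        - ((a : ℂ) * q) • (x ^ (a + 1) * y ^ b * z ^ c) := by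
  calc z * (x ^ a * y ^ b * z ^ c) = ((z * x ^ a) * y ^ b) * z ^ c := by
        rw [← mul_assoc, ← mul_assoc]
  _ = ((x ^ a * z - ((a : ℂ) * q) • x ^ (a + 1)) * y ^ b) * z ^ c := by
        rw [genq20 x z q h2 a]
  _ = (x ^ a * (z * y ^ b)) * z ^ c - ((a : ℂ) * q) • (x ^ (a + 1) * y ^ b * z ^ c) := by
        rw [sub_mul, smul_mul_assoc, sub_mul, smul_mul_assoc, mul_assoc (x ^ a) z (y ^ b)]
  _ = (x ^ a * (y ^ b * z - ((b : ℂ) * t) • (x * y ^ b))) * z ^ c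
        - ((a : ℂ) * q) • (x ^ (a + 1) * y ^ b * z ^ c) := by
        rw [genq21 x y z t h3 h1 b]
  _ = x ^ a * y ^ b * z ^ (c + 1)
        - ((b : ℂ) * t) • (x ^ (a + 1) * y ^ b * z ^ c)
        - ((a : ℂ) * q) • (x ^ (a + 1) * y ^ b * z ^ c) := by
        rw [mul_sub, mul_smul_comm, ← mul_assoc (x ^ a) x (y ^ b), ← pow_succ,
          sub_mul, smul_mul_assoc, ← mul_assoc (x ^ a) (y ^ b) z,
          mul_assoc (x ^ a * y ^ b) z (z ^ c), ← pow_succ']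

end AuxAlg

/-- the images in `F/I` of the monomials `x₁^{a₁} x₂^{a₂} x₃^{a₃}` form a `ℂ`-basis. -/
theorem basis_R12_t_one_b_eq (p q : ℂ) :
    LinearIndependent ℂ (fun e : ℕ × ℕ × ℕ =>
      RingQuot.mkAlgHom ℂ (rel p q) (X 0 ^ e.1 * X 1 ^ e.2.1 * X 2 ^ e.2.2)) ∧
    Submodule.span ℂ (Set.range (fun e : ℕ × ℕ × ℕ =>
      RingQuot.mkAlgHom ℂ (rel p q) (X 0 ^ e.1 * X 1 ^ e.2.1 * X 2 ^ e.2.2))) = ⊤ := by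
  set t : ℂ := 2 * q - p with ht
  set mk : F →ₐ[ℂ] RingQuot (rel p q) := RingQuot.mkAlgHom ℂ (rel p q) with hmk
  set v : ℕ × ℕ × ℕ → RingQuot (rel p q) :=
    (fun e : ℕ × ℕ × ℕ => mk (X 0 ^ e.1 * X 1 ^ e.2.1 * X 2 ^ e.2.2)) with hv
  -- the three relations in the quotient
  have hr1 : mk (X 1) * mk (X 0) = mk (X 0) * mk (X 1) := by
    have h := RingQuot.mkAlgHom_rel ℂ (s := rel p q)
      (x := X 1 * X 0 - X 0 * X 1) (y := 0) ⟨by left; rfl, rfl⟩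
    rw [map_zero, map_sub, map_mul, map_mul, sub_eq_zero] at h
    exact h
  have hr2 : mk (X 2) * mk (X 0) = mk (X 0) * mk (X 2) - q • (mk (X 0) * mk (X 0)) := by
    have h := RingQuot.mkAlgHom_rel ℂ (s := rel p q)
      (x := X 2 * X 0 - X 0 * X 2 + q • (X 0 * X 0)) (y := 0) ⟨by right; left; rfl, rfl⟩
    rw [map_zero, map_add, map_sub, map_smul, map_mul, map_mul, map_mul] at h
    rw [← sub_eq_zero, ← h]
    abel
  have hr3 : mk (X 2) * mk (X 1) = mk (X 1) * mk (X 2) - t • (mk (X 0) * mk (X 1)) := by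
    have h := RingQuot.mkAlgHom_rel ℂ (s := rel p q)
      (x := X 2 * X 1 - X 1 * X 2 + (2 * q - p) • (X 0 * X 1)) (y := 0)
      ⟨by right; right; rfl, rfl⟩
    rw [map_zero, map_add, map_sub, map_smul, map_mul, map_mul, map_mul] at h
    rw [← sub_eq_zero, ht, ← h]
    abel
  have hveq : ∀ a b c : ℕ, v (a, b, c) = mk (X 0) ^ a * mk (X 1) ^ b * mk (X 2) ^ c := by
    intro a b c
    simp [hv, map_mul, map_pow]
  constructor
  · -- linear independence via the representation
    let g : Fin 3 → Module.End ℂ MM := fun i =>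
      if i.val = 0 then opA else if i.val = 1 then opB else opC p q
    let φ : F →ₐ[ℂ] Module.End ℂ MM := FreeAlgebra.lift ℂ g
    have hφ0 : φ (X 0) = opA := by simp [φ, X, FreeAlgebra.lift_ι_apply, g]
    have hφ1 : φ (X 1) = opB := by simp [φ, X, FreeAlgebra.lift_ι_apply, g]
    have hφ2 : φ (X 2) = opC p q := by simp [φ, X, FreeAlgebra.lift_ι_apply, g]
    have hφ : ∀ ⦃x y : F⦄, rel p q x y → φ x = φ y := by
      rintro x y ⟨hx, rfl⟩
      rw [map_zero]
      rcases hx with rfl | rfl | rfl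
      · rw [map_sub, map_mul, map_mul, hφ0, hφ1, sub_eq_zero, relBA]
      · rw [map_add, map_sub, map_smul, map_mul, map_mul, map_mul, hφ0, hφ2]
        exact relCA p q
      · rw [map_add, map_sub, map_smul, map_mul, map_mul, map_mul, hφ0, hφ1, hφ2]
        exact relCB p q
    let ψ : RingQuot (rel p q) →ₐ[ℂ] Module.End ℂ MM := RingQuot.liftAlgHom ℂ ⟨φ, hφ⟩
    let T : RingQuot (rel p q) →ₗ[ℂ] MM :=
      (LinearMap.applyₗ (Finsupp.single ((0 : ℕ), (0 : ℕ), (0 : ℕ)) (1 : ℂ))) ∘ₗ ψ.toLinearMap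
    have hTv : ⇑T ∘ v = fun e : ℕ × ℕ × ℕ => Finsupp.single e 1 := by
      funext e
      obtain ⟨a, b, c⟩ := e
      have hψ : ∀ x : F, ψ (mk x) = φ x := fun x =>
        RingQuot.liftAlgHom_mkAlgHom_apply ℂ φ hφ x
      have : ψ (v (a, b, c)) = opA ^ a * opB ^ b * opC p q ^ c := by
        rw [show v (a, b, c) = mk (X 0 ^ a * X 1 ^ b * X 2 ^ c) from rfl, hψ,
          map_mul, map_mul, map_pow, map_pow, map_pow, hφ0, hφ1, hφ2]
      simp only [Function.comp_apply, T, LinearMap.coe_comp, LinearMap.applyₗ_apply_apply,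
        AlgHom.toLinearMap_apply]
      rw [this, Module.End.mul_apply, Module.End.mul_apply, opC_pow, opB_pow, opA_pow]
      simp
    apply LinearIndependent.of_comp T
    rw [show ⇑T ∘ (fun e : ℕ × ℕ × ℕ =>
        RingQuot.mkAlgHom ℂ (rel p q) (X 0 ^ e.1 * X 1 ^ e.2.1 * X 2 ^ e.2.2)) = ⇑T ∘ v from rfl,
      hTv]
    have := (Finsupp.basisSingleOne (R := ℂ) (ι := ℕ × ℕ × ℕ)).linearIndependent
    rwa [Finsupp.coe_basisSingleOne] at this
  · -- spanning
    set W : Submodule ℂ (RingQuot (rel p q)) := Submodule.span ℂ (Set.range v) with hW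
    have hmem : ∀ e : ℕ × ℕ × ℕ, v e ∈ W := fun e => Submodule.subset_span ⟨e, rfl⟩
    have h1 : (1 : RingQuot (rel p q)) ∈ W := by
      have := hmem (0, 0, 0)
      simpa [hv] using this
    have key : ∀ f : F, ∀ w ∈ W, mk f * w ∈ W := by
      intro f
      refine FreeAlgebra.induction ℂ (Fin 3)
        (motive := fun f => ∀ w ∈ W, mk f * w ∈ W) ?_ ?_ ?_ ?_ f
      · intro r w hw
        rw [AlgHom.commutes, ← Algebra.smul_def]
        exact W.smul_mem r hw
      · intro i w hw
        refine Submodule.span_induction (p := fun w _ => mk (FreeAlgebra.ι ℂ i) * w ∈ W)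
          ?_ ?_ ?_ ?_ hw
        · rintro _ ⟨⟨a, b, c⟩, rfl⟩
          fin_cases i
          · show mk (X 0) * v (a, b, c) ∈ W
            rw [show v (a, b, c) = mk (X 0 ^ a * X 1 ^ b * X 2 ^ c) from rfl, ← map_mul,
              show X 0 * (X 0 ^ a * X 1 ^ b * X 2 ^ c) = X 0 ^ (a + 1) * X 1 ^ b * X 2 ^ c by
                rw [← mul_assoc, ← mul_assoc, ← pow_succ']]
            exact hmem (a + 1, b, c)
          · show mk (X 1) * v (a, b, c) ∈ W
            rw [hveq a b c, ← mul_assoc, ← mul_assoc, (Commute.pow_right (hr1 : Commute _ _) a).eq,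
              mul_assoc (mk (X 0) ^ a) (mk (X 1)) (mk (X 1) ^ b), ← pow_succ', ← hveq]
            exact hmem (a, b + 1, c)
          · show mk (X 2) * v (a, b, c) ∈ W
            rw [hveq a b c, genmul2 (mk (X 0)) (mk (X 1)) (mk (X 2)) q t hr2 hr3 hr1 a b c,
              ← hveq, ← hveq]
            exact W.sub_mem (W.sub_mem (hmem _) (W.smul_mem _ (hmem _))) (W.smul_mem _ (hmem _))
        · simp
        · intro x y _ _ hx hy
          rw [mul_add]
          exact W.add_mem hx hy
        · intro r x _ hx
          rw [mul_smul_comm]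
          exact W.smul_mem r hx
      · intro f g hf hg w hw
        rw [map_mul, mul_assoc]
        exact hf _ (hg w hw)
      · intro f g hf hg w hw
        rw [map_add, add_mul]
        exact W.add_mem (hf w hw) (hg w hw)
    rw [eq_top_iff]
    intro z _
    obtain ⟨f, rfl⟩ := RingQuot.mkAlgHom_surjective ℂ (rel p q) z
    simpa using key f 1 h1
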